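/- (Integrated exponentials form an invariant class.) Let φ_{a,h}(x) = ∫_0^a e^{i⟨e^{sA}x, h⟩} e^{−∫_0^s ψ(e^{rA*}h)dr} ds for a > 0 and h ∈ D(A*). Then for each t > 0, P_t φ_{a,h} = φ_{a+t,h} − φ_{t,h}; consequently the linear span 𝒟₁ of real and imaginary parts of the functions φ_{a,h} satisfies P_t(𝒟₁) ⊆ 𝒟₁ for all t ≥ 0. -/

import Mathlib

open MeasureTheory

variable {H : Type*} [NormedAddCommGroup H] [InnerProductSpace ℝ H] [CompleteSpace H]
  [MeasurableSpace H] [BorelSpace H]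

/-- The integrated exponential
`φ_{a,h}(x) = ∫_0^a e^{i⟨e^{sA}x, h⟩} e^{−∫_0^s ψ(e^{rA*}h) dr} ds`,
where `S t = e^{tA}`. -/
noncomputable def phiExp (S : ℝ → H →L[ℝ] H) (ψ : H → ℂ) (a : ℝ) (h : H) (x : H) : ℂ :=
  ∫ s in (0:ℝ)..a,
    Complex.exp (Complex.I * ((inner ℝ (S s x) h : ℝ) : ℂ)) *
      Complex.exp (- ∫ r in (0:ℝ)..s, ψ (ContinuousLinearMap.adjoint (S r) h))

/-- The Ornstein–Uhlenbeck (generalised Mehler) semigroup acting on complex-valued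
functions. -/
noncomputable def mehlerC (S : ℝ → H →L[ℝ] H) (μ : ℝ → Measure H) (t : ℝ)
    (f : H → ℂ) (x : H) : ℂ :=
  ∫ y, f (S t x + y) ∂(μ t)

/-- The Ornstein–Uhlenbeck (generalised Mehler) semigroup acting on real-valued
functions. -/
noncomputable def mehlerR (S : ℝ → H →L[ℝ] H) (μ : ℝ → Measure H) (t : ℝ)
    (f : H → ℝ) (x : H) : ℝ :=
  ∫ y, f (S t x + y) ∂(μ t)

/-- `𝒟₁`: the linear span of real and imaginary parts of the functions `φ_{a,h}`,
`a > 0`, `h ∈ D(A*)`. -/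
noncomputable def D1span (S : ℝ → H →L[ℝ] H) (ψ : H → ℂ) (domAstar : Set H) :
    Submodule ℝ (H → ℝ) :=
  Submodule.span ℝ
    ({g | ∃ a : ℝ, 0 < a ∧ ∃ h ∈ domAstar, g = fun x => (phiExp S ψ a h x).re} ∪
     {g | ∃ a : ℝ, 0 < a ∧ ∃ h ∈ domAstar, g = fun x => (phiExp S ψ a h x).im})


open Set Filter

local notation "⟪" x ", " y "⟫" => @inner ℝ _ _ x y

lemma uIccIci {u v : ℝ} (hu : 0 ≤ u) (hv : 0 ≤ v) : Set.uIcc u v ⊆ Set.Ici 0 :=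
  fun _ hr => (le_min hu hv).trans hr.1

omit [CompleteSpace H] in
lemma innerScont (S : ℝ → H →L[ℝ] H)
    (hScont : ∀ x : H, ContinuousOn (fun t => S t x) (Set.Ici 0)) (x h : H) :
    ContinuousOn (fun r => ⟪S r x, h⟫) (Set.Ici 0) :=
  (hScont x).inner continuousOn_const

omit [CompleteSpace H] in
lemma innerSint (S : ℝ → H →L[ℝ] H)
    (hScont : ∀ x : H, ContinuousOn (fun t => S t x) (Set.Ici 0)) (x h : H)
    {u v : ℝ} (hu : 0 ≤ u) (hv : 0 ≤ v) :
    IntervalIntegrable (fun r => ⟪S r x, h⟫) MeasureTheory.volume u v :=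
  ((innerScont S hScont x h).mono (uIccIci hu hv)).intervalIntegrable

lemma normBound (S : ℝ → H →L[ℝ] H)
    (hScont : ∀ x : H, ContinuousOn (fun t => S t x) (Set.Ici 0)) (T : ℝ) :
    ∃ M : ℝ, 1 ≤ M ∧ ∀ r ∈ Set.Icc (0:ℝ) T, ‖S r‖ ≤ M := by
  rcases lt_or_ge T 0 with hT | hT
  · exact ⟨1, le_rfl, fun r hr => absurd (hr.1.trans hr.2) (not_le.2 hT)⟩
  have hpt : ∀ x : H, ∃ C, ∀ i : Set.Icc (0:ℝ) T, ‖S i x‖ ≤ C := by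
    intro x
    obtain ⟨C, hC⟩ := (isCompact_Icc (a := (0:ℝ)) (b := T)).exists_bound_of_continuousOn
      ((hScont x).mono (Set.Icc_subset_Ici_self))
    exact ⟨C, fun i => hC i i.2⟩
  obtain ⟨C, hC⟩ := banach_steinhaus (g := fun i : Set.Icc (0:ℝ) T => S i) hpt
  exact ⟨max C 1, le_max_right _ _, fun r hr => le_trans (hC ⟨r, hr⟩) (le_max_left _ _)⟩

lemma adjoint_tendsto_zero (S : ℝ → H →L[ℝ] H)
    (hS0 : S 0 = ContinuousLinearMap.id ℝ H)
    (hSadd : ∀ s t : ℝ, 0 ≤ s → 0 ≤ t → S (s + t) = S s ∘L S t)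
    (hScont : ∀ x : H, ContinuousOn (fun t => S t x) (Set.Ici 0)) (h : H) :
    Tendsto (fun δ => ContinuousLinearMap.adjoint (S δ) h) (nhdsWithin 0 (Set.Ici 0)) (nhds h) := by
  obtain ⟨M, hM1, hM⟩ := normBound S hScont 2
  -- the averaged vectors
  have key : ∀ h : H, ∀ ε ∈ Set.Ioc (0:ℝ) 1, ∃ w : H,
      ∀ x : H, ⟪w, x⟫ = ∫ r in (0:ℝ)..ε, ⟪S r x, h⟫ := by
    intro h ε hε
    have bnd : ∀ x : H, ‖∫ r in (0:ℝ)..ε, ⟪S r x, h⟫‖ ≤ (M * ‖h‖) * ‖x‖ := by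
      intro x
      have : ∀ r ∈ Set.uIoc (0:ℝ) ε, ‖⟪S r x, h⟫‖ ≤ M * ‖x‖ * ‖h‖ := by
        intro r hr
        rw [Set.uIoc_of_le hε.1.le] at hr
        refine le_trans (abs_real_inner_le_norm _ _) ?_
        have h1 : ‖S r x‖ ≤ M * ‖x‖ := by
          refine le_trans ((S r).le_opNorm x) (mul_le_mul_of_nonneg_right ?_ (norm_nonneg _))
          exact hM r ⟨hr.1.le, hr.2.trans (hε.2.trans one_le_two)⟩
        exact mul_le_mul_of_nonneg_right h1 (norm_nonneg _)
      refine le_trans (intervalIntegral.norm_integral_le_of_norm_le_const this) ?_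
      have : |ε - 0| ≤ 1 := by rw [sub_zero, abs_of_pos hε.1]; exact hε.2
      calc M * ‖x‖ * ‖h‖ * |ε - 0| ≤ M * ‖x‖ * ‖h‖ * 1 := by
            refine mul_le_mul_of_nonneg_left this (by positivity)
        _ = M * ‖h‖ * ‖x‖ := by ring
    set lm : H →ₗ[ℝ] ℝ :=
      { toFun := fun x => ∫ r in (0:ℝ)..ε, ⟪S r x, h⟫
        map_add' := by
          intro x y
          show (∫ r in (0:ℝ)..ε, ⟪S r (x + y), h⟫)
              = (∫ r in (0:ℝ)..ε, ⟪S r x, h⟫) + ∫ r in (0:ℝ)..ε, ⟪S r y, h⟫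
          have : (fun r => ⟪S r (x + y), h⟫) = fun r => ⟪S r x, h⟫ + ⟪S r y, h⟫ := by
            ext r; rw [map_add, inner_add_left]
          rw [this, intervalIntegral.integral_add (innerSint S hScont x h le_rfl hε.1.le)
            (innerSint S hScont y h le_rfl hε.1.le)]
        map_smul' := by
          intro c x
          show (∫ r in (0:ℝ)..ε, ⟪S r (c • x), h⟫) = c • ∫ r in (0:ℝ)..ε, ⟪S r x, h⟫
          have : (fun r => ⟪S r (c • x), h⟫) = fun r => c • ⟪S r x, h⟫ := by
            ext r; rw [_root_.map_smul, real_inner_smul_left]; simp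
          rw [this, intervalIntegral.integral_smul] } with hlm
    refine ⟨(InnerProductSpace.toDual ℝ H).symm (LinearMap.mkContinuous lm (M * ‖h‖) bnd),
      fun x => ?_⟩
    rw [InnerProductSpace.toDual_symm_apply]
    rfl
  -- the continuity subspace
  set CC : Submodule ℝ H :=
    { carrier := {v | Tendsto (fun δ => ContinuousLinearMap.adjoint (S δ) v)
        (nhdsWithin 0 (Set.Ici 0)) (nhds v)}
      add_mem' := by
        intro a b ha hb
        simp only [Set.mem_setOf_eq, map_add] at *
        exact ha.add hb
      zero_mem' := by
        simp only [Set.mem_setOf_eq, map_zero]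
        exact tendsto_const_nhds
      smul_mem' := by
        intro c v hv
        simp only [Set.mem_setOf_eq, _root_.map_smul] at *
        exact hv.const_smul c } with hCC
  -- norm of the adjoint operators
  have adjnorm : ∀ δ ∈ Set.Icc (0:ℝ) 2, ∀ v : H,
      ‖ContinuousLinearMap.adjoint (S δ) v‖ ≤ M * ‖v‖ := by
    intro δ hδ v
    refine le_trans ((ContinuousLinearMap.adjoint (S δ)).le_opNorm v) ?_
    have : ‖ContinuousLinearMap.adjoint (S δ)‖ = ‖S δ‖ :=
      ContinuousLinearMap.adjoint.norm_map (S δ)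
    rw [this]
    exact mul_le_mul_of_nonneg_right (hM δ hδ) (norm_nonneg _)
  -- CC is closed
  have hclosed : IsClosed (CC : Set H) := by
    refine isClosed_of_closure_subset ?_
    intro v hv
    show Tendsto _ _ _
    rw [Metric.tendsto_nhdsWithin_nhds]
    intro η hη
    have hrpos : 0 < η / (2 * (M + 1)) := by positivity
    obtain ⟨v', hv', hdist⟩ := Metric.mem_closure_iff.1 hv _ hrpos
    have hv'T : Tendsto (fun δ => ContinuousLinearMap.adjoint (S δ) v')
        (nhdsWithin 0 (Set.Ici 0)) (nhds v') := hv'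
    rw [Metric.tendsto_nhdsWithin_nhds] at hv'T
    obtain ⟨δ₁, hδ₁, hδ₁p⟩ := hv'T (η / 2) (by positivity)
    refine ⟨min δ₁ 1, lt_min hδ₁ one_pos, fun δ hδmem hδlt => ?_⟩
    have hδ0 : 0 ≤ δ := hδmem
    have hδ2 : δ ∈ Set.Icc (0:ℝ) 2 := by
      constructor
      · exact hδ0
      · have := hδlt.trans_le (min_le_right _ _)
        rw [Real.dist_eq, sub_zero, abs_of_nonneg hδ0] at this
        linarith
    have h1 : dist (ContinuousLinearMap.adjoint (S δ) v) (ContinuousLinearMap.adjoint (S δ) v')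
        ≤ M * dist v v' := by
      rw [dist_eq_norm, dist_eq_norm, ← map_sub]
      exact adjnorm δ hδ2 _
    have h2 : dist (ContinuousLinearMap.adjoint (S δ) v') v' < η / 2 :=
      hδ₁p hδmem (hδlt.trans_le (min_le_left _ _))
    calc dist (ContinuousLinearMap.adjoint (S δ) v) v
        ≤ dist (ContinuousLinearMap.adjoint (S δ) v) (ContinuousLinearMap.adjoint (S δ) v')
          + dist (ContinuousLinearMap.adjoint (S δ) v') v' + dist v' v := dist_triangle4 _ _ _ _
      _ < M * (η / (2 * (M + 1))) + η / 2 + η / (2 * (M + 1)) := by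
          rw [dist_comm v' v]
          have hMd : M * dist v v' ≤ M * (η / (2 * (M + 1))) := by nlinarith [dist_nonneg (x := v) (y := v')]
          have : M * dist v v' < M * (η / (2 * (M + 1))) ∨ M * dist v v' = M * (η / (2 * (M + 1))) := lt_or_eq_of_le hMd
          nlinarith [dist_nonneg (x := v) (y := v'), h1, h2, hdist]
      _ ≤ η := by
          have hM0 : (0:ℝ) < M + 1 := by linarith
          have e : M * (η / (2 * (M + 1))) + η / (2 * (M + 1)) = η / 2 := by
            field_simp
          linarith
  -- the averaged vectors belong to CC
  have wmem : ∀ (h' : H) (ε : ℝ), ε ∈ Set.Ioc (0:ℝ) 1 → ∀ w : H,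
      (∀ x : H, ⟪w, x⟫ = ∫ r in (0:ℝ)..ε, ⟪S r x, h'⟫) → w ∈ CC := by
    intro h' ε hε w hw
    have bound : ∀ δ ∈ Set.Icc (0:ℝ) 1,
        ‖ContinuousLinearMap.adjoint (S δ) w - w‖ ≤ 2 * (M * ‖h'‖) * δ := by
      intro δ hδ
      set v := ContinuousLinearMap.adjoint (S δ) w - w with hv
      have inner_eq : ∀ x : H, ⟪v, x⟫ =
          (∫ r in ε..(ε + δ), ⟪S r x, h'⟫) - ∫ r in (0:ℝ)..δ, ⟪S r x, h'⟫ := by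
        intro x
        have e1 : ⟪ContinuousLinearMap.adjoint (S δ) w, x⟫ = ⟪w, S δ x⟫ :=
          ContinuousLinearMap.adjoint_inner_left _ _ _
        have e2 : ⟪w, S δ x⟫ = ∫ r in (0:ℝ)..ε, ⟪S r (S δ x), h'⟫ := hw _
        have e3 : (∫ r in (0:ℝ)..ε, ⟪S r (S δ x), h'⟫)
            = ∫ r in (0:ℝ)..ε, (fun u => ⟪S u x, h'⟫) (r + δ) := by
          refine intervalIntegral.integral_congr (fun r hr => ?_)
          rw [Set.uIcc_of_le hε.1.le] at hr
          have hSe : S (r + δ) = (S r) ∘L (S δ) := hSadd r δ hr.1 hδ.1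
          show ⟪S r (S δ x), h'⟫ = ⟪S (r + δ) x, h'⟫
          rw [hSe]; rfl
        have e4 : (∫ r in (0:ℝ)..ε, (fun u => ⟪S u x, h'⟫) (r + δ))
            = ∫ u in (0+δ)..(ε+δ), ⟪S u x, h'⟫ :=
          intervalIntegral.integral_comp_add_right (fun u => ⟪S u x, h'⟫) δ
        have c1 : (∫ r in (0:ℝ)..δ, ⟪S r x, h'⟫) + (∫ r in δ..(ε+δ), ⟪S r x, h'⟫)
            = ∫ r in (0:ℝ)..(ε+δ), ⟪S r x, h'⟫ :=
          intervalIntegral.integral_add_adjacent_intervals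
            (innerSint S hScont x h' le_rfl hδ.1)
            (innerSint S hScont x h' hδ.1 (by linarith [hε.1.le, hδ.1]))
        have c2 : (∫ r in (0:ℝ)..ε, ⟪S r x, h'⟫) + (∫ r in ε..(ε+δ), ⟪S r x, h'⟫)
            = ∫ r in (0:ℝ)..(ε+δ), ⟪S r x, h'⟫ :=
          intervalIntegral.integral_add_adjacent_intervals
            (innerSint S hScont x h' le_rfl hε.1.le)
            (innerSint S hScont x h' hε.1.le (by linarith [hε.1.le, hδ.1]))
        rw [hv, inner_sub_left, e1, e2, e3, e4, zero_add]
        rw [hw x]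
        linarith
      have normle : ∀ x : H, |⟪v, x⟫| ≤ (2 * (M * ‖h'‖) * δ) * ‖x‖ := by
        intro x
        rw [inner_eq x]
        have hbnd : ∀ (p q : ℝ), 0 ≤ p → q ≤ 2 → p ≤ q →
            ‖∫ r in p..q, ⟪S r x, h'⟫‖ ≤ (M * ‖x‖ * ‖h'‖) * (q - p) := by
          intro p q hp hq2 hpq
          have hb : ∀ r ∈ Set.uIoc p q, ‖⟪S r x, h'⟫‖ ≤ M * ‖x‖ * ‖h'‖ := by
            intro r hr
            rw [Set.uIoc_of_le hpq] at hr
            refine le_trans (abs_real_inner_le_norm _ _) ?_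
            have h1 : ‖S r x‖ ≤ M * ‖x‖ := by
              refine le_trans ((S r).le_opNorm x) (mul_le_mul_of_nonneg_right ?_ (norm_nonneg _))
              exact hM r ⟨hp.trans hr.1.le, hr.2.trans hq2⟩
            exact mul_le_mul_of_nonneg_right h1 (norm_nonneg _)
          refine le_trans (intervalIntegral.norm_integral_le_of_norm_le_const hb) ?_
          rw [abs_of_nonneg (by linarith : (0:ℝ) ≤ q - p)]
        have b1 := hbnd ε (ε + δ) hε.1.le (by linarith [hε.2, hδ.2]) (by linarith [hδ.1])
        have b2 := hbnd 0 δ le_rfl (by linarith [hδ.2]) hδ.1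
        rw [add_sub_cancel_left] at b1
        rw [sub_zero] at b2
        calc |(∫ r in ε..(ε + δ), ⟪S r x, h'⟫) - ∫ r in (0:ℝ)..δ, ⟪S r x, h'⟫|
            ≤ ‖∫ r in ε..(ε + δ), ⟪S r x, h'⟫‖ + ‖∫ r in (0:ℝ)..δ, ⟪S r x, h'⟫‖ :=
              abs_sub _ _
          _ ≤ (M * ‖x‖ * ‖h'‖) * δ + (M * ‖x‖ * ‖h'‖) * δ := add_le_add b1 b2
          _ = (2 * (M * ‖h'‖) * δ) * ‖x‖ := by ring
      have sq : ‖v‖ * ‖v‖ ≤ (2 * (M * ‖h'‖) * δ) * ‖v‖ := by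
        have hl := normle v
        rw [← real_inner_self_eq_norm_mul_norm]
        exact le_trans (le_abs_self _) hl
      rcases eq_or_lt_of_le (norm_nonneg v) with h0 | h0
      · rw [← h0]
        have hA : (0:ℝ) ≤ 2 * (M * ‖h'‖) := by nlinarith [norm_nonneg h']
        exact mul_nonneg hA hδ.1
      · exact le_of_mul_le_mul_right sq h0
    show w ∈ CC
    have : Tendsto (fun δ => ContinuousLinearMap.adjoint (S δ) w)
        (nhdsWithin 0 (Set.Ici 0)) (nhds w) := by
      rw [Metric.tendsto_nhdsWithin_nhds]
      intro η hη
      refine ⟨min 1 (η / (2 * (M * ‖h'‖) + 1)), lt_min one_pos (by positivity), fun δ hδm hδlt => ?_⟩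
      have hδ0 : (0:ℝ) ≤ δ := hδm
      rw [Real.dist_eq, sub_zero, abs_of_nonneg hδ0] at hδlt
      have hδ1 : δ ≤ 1 := le_of_lt (lt_of_lt_of_le hδlt (min_le_left _ _))
      have hb := bound δ ⟨hδ0, hδ1⟩
      rw [dist_eq_norm]
      have h2 : δ < η / (2 * (M * ‖h'‖) + 1) := lt_of_lt_of_le hδlt (min_le_right _ _)
      have hpos : (0:ℝ) < 2 * (M * ‖h'‖) + 1 := by positivity
      rw [lt_div_iff₀ hpos] at h2
      nlinarith [norm_nonneg h', hδ0, mul_nonneg (mul_nonneg (by norm_num : (0:ℝ) ≤ 2) (mul_nonneg (by linarith : (0:ℝ) ≤ M) (norm_nonneg h'))) hδ0]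
    exact this
  -- orthogonal complement of CC is trivial
  have horth : ∀ v : H, (∀ u ∈ CC, ⟪u, v⟫ = 0) → v = 0 := by
    intro v hvperp
    have hzero : ∀ h' : H, ∀ ε ∈ Set.Ioc (0:ℝ) 1, (∫ r in (0:ℝ)..ε, ⟪S r v, h'⟫) = 0 := by
      intro h' ε hε
      obtain ⟨w, hw⟩ := key h' ε hε
      have h0 := hvperp w (wmem h' ε hε w hw)
      rw [hw v] at h0
      exact h0
    have hinner : ∀ h' : H, ⟪S 0 v, h'⟫ = 0 := by
      intro h'
      have hc : ContinuousWithinAt (fun r => ⟪S r v, h'⟫) (Set.Ici 0) 0 :=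
        (innerScont S hScont v h') 0 Set.self_mem_Ici
      have hle : ∀ η > (0:ℝ), |⟪S 0 v, h'⟫| ≤ η := by
        intro η hη
        rw [ContinuousWithinAt, Metric.tendsto_nhdsWithin_nhds] at hc
        obtain ⟨δ₁, hδ₁, hp⟩ := hc η hη
        set ε := min (δ₁ / 2) 1 with hεdef
        have hεI : ε ∈ Set.Ioc (0:ℝ) 1 := ⟨lt_min (by linarith) one_pos, min_le_right _ _⟩
        have hint := hzero h' ε hεI
        have e : (∫ r in (0:ℝ)..ε, (⟪S r v, h'⟫ - ⟪S 0 v, h'⟫))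
            = - (ε • ⟪S 0 v, h'⟫) := by
          rw [intervalIntegral.integral_sub (innerSint S hScont v h' le_rfl hεI.1.le)
            intervalIntegrable_const, hint, intervalIntegral.integral_const, zero_sub, sub_zero]
        have ebound : ‖∫ r in (0:ℝ)..ε, (⟪S r v, h'⟫ - ⟪S 0 v, h'⟫)‖ ≤ η * |ε - 0| := by
          refine intervalIntegral.norm_integral_le_of_norm_le_const ?_
          intro r hr
          rw [Set.uIoc_of_le hεI.1.le] at hr
          have hr0 : r ∈ Set.Ici (0:ℝ) := le_of_lt hr.1
          have hrd : dist r 0 < δ₁ := by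
            rw [Real.dist_eq, sub_zero, abs_of_nonneg (le_of_lt hr.1)]
            have : r ≤ δ₁ / 2 := hr.2.trans (min_le_left _ _)
            linarith
          have := hp hr0 hrd
          rw [Real.dist_eq] at this
          exact le_of_lt this
        rw [e] at ebound
        rw [norm_neg, smul_eq_mul, Real.norm_eq_abs, abs_mul,
          abs_of_pos hεI.1] at ebound
        rw [sub_zero, abs_of_pos hεI.1] at ebound
        rw [mul_comm η ε] at ebound
        exact le_of_mul_le_mul_left ebound hεI.1
      rcases le_or_gt |⟪S 0 v, h'⟫| 0 with h0 | h0
      · exact abs_eq_zero.1 (le_antisymm h0 (abs_nonneg _))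
      · have := hle (|⟪S 0 v, h'⟫| / 2) (by linarith)
        linarith
    have hv0 : ⟪v, v⟫ = (0:ℝ) := by
      have := hinner v
      rw [hS0] at this
      exact this
    exact inner_self_eq_zero.1 hv0
  have htop : CC = ⊤ := by
    haveI : CompleteSpace CC := hclosed.completeSpace_coe
    rw [← Submodule.orthogonal_eq_bot_iff, Submodule.eq_bot_iff]
    intro v hvmem
    exact horth v ((Submodule.mem_orthogonal CC v).1 hvmem)
  have hmem : h ∈ CC := htop ▸ Submodule.mem_top
  exact hmem

lemma adjoint_contOn (S : ℝ → H →L[ℝ] H)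
    (hS0 : S 0 = ContinuousLinearMap.id ℝ H)
    (hSadd : ∀ s t : ℝ, 0 ≤ s → 0 ≤ t → S (s + t) = S s ∘L S t)
    (hScont : ∀ x : H, ContinuousOn (fun t => S t x) (Set.Ici 0)) (h : H) :
    ContinuousOn (fun r => ContinuousLinearMap.adjoint (S r) h) (Set.Ici 0) := by
  intro r₀ hr₀
  obtain ⟨M, hM1, hMb⟩ := normBound S hScont (r₀ + 1)
  have hSC := adjoint_tendsto_zero S hS0 hSadd hScont h
  rw [Metric.tendsto_nhdsWithin_nhds] at hSC
  rw [ContinuousWithinAt, Metric.tendsto_nhdsWithin_nhds]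
  intro η hη
  obtain ⟨δ₁, hδ₁, hp⟩ := hSC (η / (M + 1)) (by positivity)
  refine ⟨min δ₁ 1, lt_min hδ₁ one_pos, fun r hr hrd => ?_⟩
  have hr0 : (0:ℝ) ≤ r := hr
  have hrd1 : |r - r₀| < δ₁ := by
    rw [Real.dist_eq] at hrd; exact hrd.trans_le (min_le_left _ _)
  have hrdle1 : |r - r₀| < 1 := by
    rw [Real.dist_eq] at hrd; exact hrd.trans_le (min_le_right _ _)
  have hMfrac : M * (η / (M + 1)) < η := by
    have h1 : M * (η / (M + 1)) < (M + 1) * (η / (M + 1)) :=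
      mul_lt_mul_of_pos_right (by linarith) (by positivity)
    have h2 : (M + 1) * (η / (M + 1)) = η := by field_simp
    linarith
  have adjn : ∀ u, u ∈ Set.Icc (0:ℝ) (r₀ + 1) → ∀ z : H,
      ‖ContinuousLinearMap.adjoint (S u) z‖ ≤ M * ‖z‖ := by
    intro u hu z
    refine le_trans ((ContinuousLinearMap.adjoint (S u)).le_opNorm z) ?_
    have hn : ‖ContinuousLinearMap.adjoint (S u)‖ = ‖S u‖ :=
      ContinuousLinearMap.adjoint.norm_map (S u)
    rw [hn]
    exact mul_le_mul_of_nonneg_right (hMb u hu) (norm_nonneg _)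
  rcases le_or_gt r₀ r with hle | hlt
  · have hδ0 : (0:ℝ) ≤ r - r₀ := by linarith
    have hcomp : S r = S (r - r₀) ∘L S r₀ := by
      have := hSadd (r - r₀) r₀ hδ0 hr₀
      rwa [sub_add_cancel] at this
    have e : ContinuousLinearMap.adjoint (S r) h
        = ContinuousLinearMap.adjoint (S r₀) (ContinuousLinearMap.adjoint (S (r - r₀)) h) := by
      rw [hcomp, ContinuousLinearMap.adjoint_comp]; rfl
    rw [dist_eq_norm, e, ← map_sub]
    have hsmall : ‖ContinuousLinearMap.adjoint (S (r - r₀)) h - h‖ < η / (M + 1) := by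
      have hd : dist (r - r₀) 0 < δ₁ := by rw [Real.dist_eq, sub_zero]; exact hrd1
      have := hp (Set.mem_Ici.2 hδ0) hd
      rwa [dist_eq_norm] at this
    calc ‖ContinuousLinearMap.adjoint (S r₀) (ContinuousLinearMap.adjoint (S (r - r₀)) h - h)‖
        ≤ M * ‖ContinuousLinearMap.adjoint (S (r - r₀)) h - h‖ :=
          adjn r₀ ⟨hr₀, by linarith⟩ _
      _ < M * (η / (M + 1)) := mul_lt_mul_of_pos_left hsmall (by linarith)
      _ < η := hMfrac
  · have hδ0 : (0:ℝ) ≤ r₀ - r := by linarith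
    have hcomp : S r₀ = S (r₀ - r) ∘L S r := by
      have := hSadd (r₀ - r) r hδ0 hr0
      rwa [sub_add_cancel] at this
    have e : ContinuousLinearMap.adjoint (S r₀) h
        = ContinuousLinearMap.adjoint (S r) (ContinuousLinearMap.adjoint (S (r₀ - r)) h) := by
      rw [hcomp, ContinuousLinearMap.adjoint_comp]; rfl
    rw [dist_eq_norm, e, ← map_sub]
    have hsmall : ‖h - ContinuousLinearMap.adjoint (S (r₀ - r)) h‖ < η / (M + 1) := by
      have hd : dist (r₀ - r) 0 < δ₁ := by
        rw [Real.dist_eq, sub_zero, abs_sub_comm]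
        exact hrd1
      have := hp (Set.mem_Ici.2 hδ0) hd
      rw [dist_eq_norm] at this
      rwa [norm_sub_rev]
    calc ‖ContinuousLinearMap.adjoint (S r) (h - ContinuousLinearMap.adjoint (S (r₀ - r)) h)‖
        ≤ M * ‖h - ContinuousLinearMap.adjoint (S (r₀ - r)) h‖ :=
          adjn r ⟨hr0, by linarith⟩ _
      _ < M * (η / (M + 1)) := mul_lt_mul_of_pos_left hsmall (by linarith)
      _ < η := hMfrac

lemma jointScont (S : ℝ → H →L[ℝ] H)
    (hScont : ∀ x : H, ContinuousOn (fun t => S t x) (Set.Ici 0)) :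
    ContinuousOn (fun p : ℝ × H => S p.1 p.2) (Set.Ici 0 ×ˢ (Set.univ : Set H)) := by
  rintro ⟨r₀, z₀⟩ ⟨hr₀, -⟩
  obtain ⟨M, hM1, hMb⟩ := normBound S hScont (r₀ + 1)
  have hM0 : (0:ℝ) < M := lt_of_lt_of_le one_pos hM1
  rw [ContinuousWithinAt, Metric.tendsto_nhdsWithin_nhds]
  intro η hη
  have hc := hScont z₀ r₀ hr₀
  rw [ContinuousWithinAt, Metric.tendsto_nhdsWithin_nhds] at hc
  obtain ⟨δ₁, hδ₁, hp⟩ := hc (η / 2) (by positivity)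
  refine ⟨min (min δ₁ 1) (η / (2 * M)),
    lt_min (lt_min hδ₁ one_pos) (div_pos hη (by linarith)), ?_⟩
  rintro ⟨r, z⟩ ⟨hr, -⟩ hd
  rw [Prod.dist_eq, max_lt_iff] at hd
  obtain ⟨hd1, hd2⟩ := hd
  have hrd1 : dist r r₀ < δ₁ := hd1.trans_le ((min_le_left _ _).trans (min_le_left _ _))
  have hrdle1 : dist r r₀ < 1 := hd1.trans_le ((min_le_left _ _).trans (min_le_right _ _))
  have hzd : dist z z₀ < η / (2 * M) := hd2.trans_le (min_le_right _ _)
  have hrIcc : r ∈ Set.Icc (0:ℝ) (r₀ + 1) := by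
    constructor
    · exact hr
    · rw [Real.dist_eq] at hrdle1
      cases abs_lt.1 hrdle1 with
      | intro a b => linarith
  calc dist (S r z) (S r₀ z₀)
      ≤ dist (S r z) (S r z₀) + dist (S r z₀) (S r₀ z₀) := dist_triangle _ _ _
    _ < η / 2 + η / 2 := by
        refine add_lt_add_of_lt_of_lt ?_ (hp hr hrd1)
        rw [dist_eq_norm, ← map_sub]
        calc ‖S r (z - z₀)‖ ≤ ‖S r‖ * ‖z - z₀‖ := (S r).le_opNorm _
          _ ≤ M * ‖z - z₀‖ := mul_le_mul_of_nonneg_right (hMb r hrIcc) (norm_nonneg _)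
          _ < M * (η / (2 * M)) := by
              rw [dist_eq_norm] at hzd
              rcases eq_or_lt_of_le (norm_nonneg (z - z₀)) with h0 | h0
              · rw [← h0, mul_zero]; positivity
              · exact mul_lt_mul_of_pos_left hzd hM0
          _ = η / 2 := by field_simp
    _ = η := by ring




lemma mehler_key (S : ℝ → H →L[ℝ] H)
    (hS0 : S 0 = ContinuousLinearMap.id ℝ H)
    (hSadd : ∀ s t : ℝ, 0 ≤ s → 0 ≤ t → S (s + t) = S s ∘L S t)
    (hScont : ∀ x : H, ContinuousOn (fun t => S t x) (Set.Ici 0))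
    (ψ : H → ℂ) (hψ : Continuous ψ)
    (μ : ℝ → Measure H) (hμ : ∀ t, IsProbabilityMeasure (μ t))
    (hμchar : ∀ t : ℝ, 0 ≤ t → ∀ h : H,
      ∫ y, Complex.exp (Complex.I * ((inner ℝ h y : ℝ) : ℂ)) ∂(μ t)
        = Complex.exp (- ∫ r in (0:ℝ)..t, ψ (ContinuousLinearMap.adjoint (S r) h)))
    (t : ℝ) (ht : 0 ≤ t) (a : ℝ) (ha : 0 < a) (h : H) (x : H) :
    Integrable (fun y => phiExp S ψ a h (S t x + y)) (μ t) ∧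
      mehlerC S μ t (phiExp S ψ a h) x
        = phiExp S ψ (a + t) h x - phiExp S ψ t h x := by
  haveI := hμ t
  set c : ℝ → H := fun r => ContinuousLinearMap.adjoint (S r) h with hc
  have ccont : ContinuousOn c (Set.Ici 0) := adjoint_contOn S hS0 hSadd hScont h
  set g : ℝ → ℂ := fun r => ψ (c r) with hg
  have gcont : ContinuousOn g (Set.Ici 0) := hψ.comp_continuousOn ccont
  have gint : ∀ u v : ℝ, 0 ≤ u → 0 ≤ v → IntervalIntegrable g MeasureTheory.volume u v :=
    fun u v hu hv => (gcont.mono (uIccIci hu hv)).intervalIntegrable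
  set K : ℝ → ℂ := fun u => ∫ r in (0:ℝ)..u, g r with hK
  have Kcont : ∀ R : ℝ, 0 ≤ R → ContinuousOn K (Set.Icc 0 R) := by
    intro R hR
    have hKc := intervalIntegral.continuousOn_primitive_interval'
      (gint 0 R le_rfl hR) Set.left_mem_uIcc
    rwa [Set.uIcc_of_le hR] at hKc
  set F : H × ℝ → ℂ := fun p =>
    Complex.exp (Complex.I * ((inner ℝ (S p.2 (S t x + p.1)) h : ℝ) : ℂ))
      * Complex.exp (- K p.2) with hF
  have hrestr : (μ t).prod (MeasureTheory.volume.restrict (Set.Ioc 0 a))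
      = ((μ t).prod MeasureTheory.volume).restrict (Set.univ ×ˢ Set.Ioc 0 a) := by
    rw [← Measure.prod_restrict, Measure.restrict_univ]
  have FcontOn : ContinuousOn F ((Set.univ : Set H) ×ˢ Set.Icc 0 a) := by
    have hmap : ContinuousOn (fun p : H × ℝ => S p.2 (S t x + p.1))
        (Set.univ ×ˢ Set.Icc 0 a) := by
      have hin : Continuous (fun p : H × ℝ => ((p.2, S t x + p.1) : ℝ × H)) := by
        exact (continuous_snd).prodMk (continuous_const.add continuous_fst)
      refine (jointScont S hScont).comp hin.continuousOn ?_
      rintro ⟨z, s⟩ ⟨-, hs⟩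
      exact ⟨hs.1, Set.mem_univ _⟩
    have c1 : ContinuousOn (fun p : H × ℝ => (inner ℝ (S p.2 (S t x + p.1)) h : ℝ))
        (Set.univ ×ˢ Set.Icc 0 a) := hmap.inner continuousOn_const
    have c2 : ContinuousOn
        (fun p : H × ℝ => Complex.exp (Complex.I * ((inner ℝ (S p.2 (S t x + p.1)) h : ℝ) : ℂ)))
        (Set.univ ×ˢ Set.Icc 0 a) :=
      Complex.continuous_exp.comp_continuousOn
        (continuousOn_const.mul (Complex.continuous_ofReal.comp_continuousOn c1))
    have c3 : ContinuousOn (fun p : H × ℝ => Complex.exp (- K p.2))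
        (Set.univ ×ˢ Set.Icc 0 a) := by
      refine Complex.continuous_exp.comp_continuousOn ?_
      refine ContinuousOn.neg ?_
      refine (Kcont a ha.le).comp continuous_snd.continuousOn ?_
      rintro ⟨z, s⟩ ⟨-, hs⟩
      exact hs
    exact c2.mul c3
  have Fmeas : AEStronglyMeasurable F
      ((μ t).prod (MeasureTheory.volume.restrict (Set.Ioc 0 a))) := by
    rw [hrestr]
    refine ContinuousOn.aestronglyMeasurable
      (FcontOn.mono (Set.prod_mono Set.Subset.rfl Set.Ioc_subset_Icc_self))
      (MeasurableSet.univ.prod measurableSet_Ioc)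
  obtain ⟨C, hC⟩ := (isCompact_Icc (a := (0:ℝ)) (b := a)).exists_bound_of_continuousOn
    (Complex.continuous_exp.comp_continuousOn (Kcont a ha.le).neg)
  have Fbound : ∀ p ∈ (Set.univ : Set H) ×ˢ Set.Ioc (0:ℝ) a, ‖F p‖ ≤ C := by
    rintro ⟨z, s⟩ ⟨-, hs⟩
    rw [hF]
    simp only
    rw [norm_mul]
    have h1 : ‖Complex.exp (Complex.I * ((inner ℝ (S s (S t x + z)) h : ℝ) : ℂ))‖ = 1 := by
      rw [Complex.norm_exp]
      simp [Complex.mul_re]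
    rw [h1, one_mul]
    exact hC s ⟨hs.1.le, hs.2⟩
  haveI : IsFiniteMeasure (MeasureTheory.volume.restrict (Set.Ioc (0:ℝ) a)) := by
    constructor
    rw [Measure.restrict_apply_univ, Real.volume_Ioc]
    exact ENNReal.ofReal_lt_top
  have Fint : Integrable F ((μ t).prod (MeasureTheory.volume.restrict (Set.Ioc 0 a))) := by
    refine Integrable.mono' (integrable_const C) Fmeas ?_
    have hae := ae_restrict_mem (μ := (μ t).prod MeasureTheory.volume)
      (MeasurableSet.univ.prod (measurableSet_Ioc (a := (0:ℝ)) (b := a)))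
    rw [← hrestr] at hae
    exact hae.mono (fun p hp => Fbound p hp)
  have phi_eq : ∀ y : H, phiExp S ψ a h (S t x + y)
      = ∫ s in Set.Ioc (0:ℝ) a, F (y, s) := by
    intro y
    rw [phiExp, intervalIntegral.integral_of_le ha.le]
  have int1 : Integrable (fun y => phiExp S ψ a h (S t x + y)) (μ t) := by
    have heq : (fun y => phiExp S ψ a h (S t x + y))
        = fun y => ∫ s in Set.Ioc (0:ℝ) a, F (y, s) := funext phi_eq
    rw [heq]
    exact Fint.integral_prod_left
  refine ⟨int1, ?_⟩
  have swap : mehlerC S μ t (phiExp S ψ a h) x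
      = ∫ s in Set.Ioc (0:ℝ) a, ∫ y, F (y, s) ∂(μ t) := by
    rw [mehlerC]
    have heq : (fun y => phiExp S ψ a h (S t x + y))
        = fun y => ∫ s, (fun y s => F (y, s)) y s ∂(MeasureTheory.volume.restrict (Set.Ioc 0 a)) :=
      funext phi_eq
    rw [heq]
    exact MeasureTheory.integral_integral_swap Fint
  -- inner integral evaluation
  set G : ℝ → ℂ := fun u =>
    Complex.exp (Complex.I * ((inner ℝ (S u x) h : ℝ) : ℂ)) * Complex.exp (- K u) with hG
  have inner_eval : ∀ s ∈ Set.Ioc (0:ℝ) a, (∫ y, F (y, s) ∂(μ t)) = G (s + t) := by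
    intro s hs
    have hs0 : (0:ℝ) ≤ s := hs.1.le
    have Fdecomp : (fun y : H => F (y, s))
        = fun y => (Complex.exp (Complex.I * ((inner ℝ (S (s + t) x) h : ℝ) : ℂ))
            * Complex.exp (- K s))
          * Complex.exp (Complex.I * ((inner ℝ (c s) y : ℝ) : ℂ)) := by
      funext y
      rw [hF]
      simp only
      have h1 : S s (S t x + y) = S (s + t) x + S s y := by
        rw [map_add]
        congr 1
        rw [hSadd s t hs0 ht]
        rfl
      have h2 : (inner ℝ (S s y) h : ℝ) = (inner ℝ (c s) y : ℝ) := by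
        rw [hc]
        simp only
        rw [ContinuousLinearMap.adjoint_inner_left]
        exact real_inner_comm _ _
      rw [h1, inner_add_left, h2]
      push_cast
      rw [mul_add, Complex.exp_add]
      ring
    rw [Fdecomp, MeasureTheory.integral_const_mul, hμchar t ht (c s)]
    have e1 : (∫ r in (0:ℝ)..t, ψ (ContinuousLinearMap.adjoint (S r) (c s)))
        = ∫ r in (0:ℝ)..t, g (s + r) := by
      refine intervalIntegral.integral_congr (fun r hr => ?_)
      rw [Set.uIcc_of_le ht] at hr
      rw [hg, hc]
      simp only
      have hcs : S (s + r) = S s ∘L S r := hSadd s r hs0 hr.1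
      rw [hcs, ContinuousLinearMap.adjoint_comp]
      rfl
    have e2 : (∫ r in (0:ℝ)..t, g (s + r)) = ∫ r in s..(s + t), g r := by
      have := intervalIntegral.integral_comp_add_left g s (a := 0) (b := t)
      rwa [add_zero] at this
    have e3 : K s + (∫ r in s..(s + t), g r) = K (s + t) :=
      intervalIntegral.integral_add_adjacent_intervals (gint 0 s le_rfl hs0)
        (gint s (s + t) hs0 (by linarith))
    rw [e1, e2, hG]
    simp only
    rw [mul_assoc, ← Complex.exp_add, ← neg_add, e3]
  rw [swap, MeasureTheory.setIntegral_congr_fun measurableSet_Ioc inner_eval]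
  have step3 : (∫ s in Set.Ioc (0:ℝ) a, G (s + t)) = ∫ s in (0:ℝ)..a, G (s + t) :=
    (intervalIntegral.integral_of_le ha.le).symm
  have step4 : (∫ s in (0:ℝ)..a, G (s + t)) = ∫ u in t..(a + t), G u := by
    have := intervalIntegral.integral_comp_add_right G t (a := 0) (b := a)
    rwa [zero_add] at this
  have Gcont : ContinuousOn G (Set.Icc 0 (a + t)) := by
    have c1 : ContinuousOn (fun u => (inner ℝ (S u x) h : ℝ)) (Set.Icc 0 (a + t)) :=
      (innerScont S hScont x h).mono Set.Icc_subset_Ici_self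
    have c2 : ContinuousOn
        (fun u => Complex.exp (Complex.I * ((inner ℝ (S u x) h : ℝ) : ℂ)))
        (Set.Icc 0 (a + t)) :=
      Complex.continuous_exp.comp_continuousOn
        (continuousOn_const.mul (Complex.continuous_ofReal.comp_continuousOn c1))
    have c3 : ContinuousOn (fun u => Complex.exp (- K u)) (Set.Icc 0 (a + t)) :=
      Complex.continuous_exp.comp_continuousOn (Kcont (a + t) (by linarith)).neg
    exact c2.mul c3
  have gi1 : IntervalIntegrable G MeasureTheory.volume 0 t := by
    refine (Gcont.mono ?_).intervalIntegrable
    rw [Set.uIcc_of_le ht]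
    exact Set.Icc_subset_Icc le_rfl (by linarith)
  have gi2 : IntervalIntegrable G MeasureTheory.volume t (a + t) := by
    refine (Gcont.mono ?_).intervalIntegrable
    rw [Set.uIcc_of_le (by linarith : t ≤ a + t)]
    exact Set.Icc_subset_Icc ht le_rfl
  have step5 : (∫ u in t..(a + t), G u)
      = (∫ u in (0:ℝ)..(a + t), G u) - ∫ u in (0:ℝ)..t, G u := by
    have := intervalIntegral.integral_add_adjacent_intervals gi1 gi2
    rw [← this]
    ring
  rw [step3, step4, step5]
  rfl


/-- `P_t φ_{a,h} = φ_{a+t,h} − φ_{t,h}` for `t > 0`, `a > 0`,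
`h ∈ D(A*)`; consequently the span `𝒟₁` of real and imaginary parts of the `φ_{a,h}`
satisfies `P_t(𝒟₁) ⊆ 𝒟₁` for all `t ≥ 0`. -/
theorem integrated_exponentials_invariant
    (S : ℝ → H →L[ℝ] H)
    (hS0 : S 0 = ContinuousLinearMap.id ℝ H)
    (hSadd : ∀ s t : ℝ, 0 ≤ s → 0 ≤ t → S (s + t) = S s ∘L S t)
    (hScont : ∀ x : H, ContinuousOn (fun t => S t x) (Set.Ici 0))
    (ψ : H → ℂ) (hψ : Continuous ψ) (hψ0 : ψ 0 = 0)
    (domAstar : Set H)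
    (μ : ℝ → Measure H)
    (hμ : ∀ t, IsProbabilityMeasure (μ t))
    -- characteristic functions of the Mehler semigroup measures
    (hμchar : ∀ t : ℝ, 0 ≤ t → ∀ h : H,
      ∫ y, Complex.exp (Complex.I * ((inner ℝ h y : ℝ) : ℂ)) ∂(μ t)
        = Complex.exp (- ∫ r in (0:ℝ)..t, ψ (ContinuousLinearMap.adjoint (S r) h))) :
    (∀ t : ℝ, 0 < t → ∀ a : ℝ, 0 < a → ∀ h ∈ domAstar, ∀ x : H,
      mehlerC S μ t (phiExp S ψ a h) x = phiExp S ψ (a + t) h x - phiExp S ψ t h x) ∧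
    (∀ t : ℝ, 0 ≤ t → ∀ f ∈ D1span S ψ domAstar,
      (fun x => mehlerR S μ t f x) ∈ D1span S ψ domAstar) := by
  constructor
  · intro t ht a ha h _ x
    exact (mehler_key S hS0 hSadd hScont ψ hψ μ hμ hμchar t ht.le a ha h x).2
  · intro t ht f hf
    haveI := hμ t
    suffices hmain : (∀ x : H, Integrable (fun y => f (S t x + y)) (μ t)) ∧
        (fun x => mehlerR S μ t f x) ∈ D1span S ψ domAstar from hmain.2
    induction hf using Submodule.span_induction with
    | mem f hfmem =>
      have phzero : ∀ h : H, (fun x => phiExp S ψ 0 h x) = fun _ => (0:ℂ) := by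
        intro h
        funext x
        rw [phiExp, intervalIntegral.integral_same]
      rcases hfmem with ⟨a', ha', h, hdom, rfl⟩ | ⟨a', ha', h, hdom, rfl⟩
      · have key := fun x => mehler_key S hS0 hSadd hScont ψ hψ μ hμ hμchar t ht a' ha' h x
        constructor
        · intro x
          simpa using (key x).1.re
        · have hmeh : (fun x => mehlerR S μ t (fun z => (phiExp S ψ a' h z).re) x)
              = (fun x => (phiExp S ψ (a' + t) h x).re) - fun x => (phiExp S ψ t h x).re := by
            funext x
            rw [Pi.sub_apply, mehlerR]
            have hre : (∫ y, (phiExp S ψ a' h (S t x + y)).re ∂(μ t))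
                = (∫ y, phiExp S ψ a' h (S t x + y) ∂(μ t)).re := by
              simpa using integral_re (key x).1
            rw [hre]
            have hmc : (∫ y, phiExp S ψ a' h (S t x + y) ∂(μ t))
                = mehlerC S μ t (phiExp S ψ a' h) x := rfl
            rw [hmc, (key x).2, Complex.sub_re]
          rw [hmeh]
          refine Submodule.sub_mem _ ?_ ?_
          · exact Submodule.subset_span (Set.mem_union_left _
              ⟨a' + t, by linarith, h, hdom, rfl⟩)
          · rcases eq_or_lt_of_le ht with h0 | h0
            · have hz : (fun x => (phiExp S ψ t h x).re) = (0 : H → ℝ) := by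
                funext x
                rw [← h0, phiExp, intervalIntegral.integral_same]
                rfl
              rw [hz]
              exact Submodule.zero_mem _
            · exact Submodule.subset_span (Set.mem_union_left _ ⟨t, h0, h, hdom, rfl⟩)
      · have key := fun x => mehler_key S hS0 hSadd hScont ψ hψ μ hμ hμchar t ht a' ha' h x
        constructor
        · intro x
          simpa using (key x).1.im
        · have hmeh : (fun x => mehlerR S μ t (fun z => (phiExp S ψ a' h z).im) x)
              = (fun x => (phiExp S ψ (a' + t) h x).im) - fun x => (phiExp S ψ t h x).im := by
            funext x
            rw [Pi.sub_apply, mehlerR]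
            have hre : (∫ y, (phiExp S ψ a' h (S t x + y)).im ∂(μ t))
                = (∫ y, phiExp S ψ a' h (S t x + y) ∂(μ t)).im := by
              simpa using integral_im (key x).1
            rw [hre]
            have hmc : (∫ y, phiExp S ψ a' h (S t x + y) ∂(μ t))
                = mehlerC S μ t (phiExp S ψ a' h) x := rfl
            rw [hmc, (key x).2, Complex.sub_im]
          rw [hmeh]
          refine Submodule.sub_mem _ ?_ ?_
          · exact Submodule.subset_span (Set.mem_union_right _
              ⟨a' + t, by linarith, h, hdom, rfl⟩)
          · rcases eq_or_lt_of_le ht with h0 | h0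
            · have hz : (fun x => (phiExp S ψ t h x).im) = (0 : H → ℝ) := by
                funext x
                rw [← h0, phiExp, intervalIntegral.integral_same]
                rfl
              rw [hz]
              exact Submodule.zero_mem _
            · exact Submodule.subset_span (Set.mem_union_right _ ⟨t, h0, h, hdom, rfl⟩)
    | zero =>
      constructor
      · intro x
        simpa using (integrable_const (0:ℝ) (μ := μ t))
      · have hz : (fun x => mehlerR S μ t 0 x) = (0 : H → ℝ) := by
          funext x
          rw [mehlerR]
          simp
        rw [hz]
        exact Submodule.zero_mem _
    | add f g hfm hgm ihf ihg =>
      constructor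
      · intro x
        have := (ihf.1 x).add (ihg.1 x)
        exact this
      · have hadd : (fun x => mehlerR S μ t (f + g) x)
            = (fun x => mehlerR S μ t f x) + fun x => mehlerR S μ t g x := by
          funext x
          rw [Pi.add_apply, mehlerR, mehlerR, mehlerR]
          simp only [Pi.add_apply]
          exact MeasureTheory.integral_add (ihf.1 x) (ihg.1 x)
        rw [hadd]
        exact Submodule.add_mem _ ihf.2 ihg.2
    | smul r f hfm ihf =>
      constructor
      · intro x
        have := (ihf.1 x).smul r
        exact this
      · have hsmul : (fun x => mehlerR S μ t (r • f) x)
            = r • fun x => mehlerR S μ t f x := by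
          funext x
          rw [Pi.smul_apply, mehlerR, mehlerR]
          simp only [Pi.smul_apply]
          exact MeasureTheory.integral_smul r _
        rw [hsmul]
        exact Submodule.smul_mem _ r ihf.2
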